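/- Assume additionally ∑_{k=1}^∞ c_k < +∞. Then for every a > 0, ξ ∈ [0,1] and every integer k ≥ 2, the series ∑_{j=1}^∞ c_j/(x + γ_j) converges absolutely for every real x ∈ (−γ_k, −γ_{k−1}), and the function ℓ_a has a real zero μ in the open interval (−γ_k, −γ_{k−1}). Moreover, if a^{2(1−ξ)} > S, then ℓ_a also has a real zero in (−γ_1, 0). -/

import Mathlib

open Real

lemma aux_abs_sum (c γs : ℕ → ℝ) (hc : ∀ j, 0 < c j) (hcsum : Summable c)
    (x δ : ℝ) (hδ : 0 < δ) (hb : ∀ j, δ ≤ |x + γs j|) :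
    Summable fun j => |c j / (x + γs j)| := by
  refine Summable.of_nonneg_of_le (fun j => abs_nonneg _) (fun j => ?_) (hcsum.div_const δ)
  rw [abs_div, abs_of_pos (hc j)]
  exact div_le_div_of_nonneg_left (hc j).le hδ (hb j)

lemma aux_cont (c γs : ℕ → ℝ) (hc : ∀ j, 0 < c j) (hcsum : Summable c)
    (s : Set ℝ) (δ : ℝ) (hδ : 0 < δ) (hb : ∀ x ∈ s, ∀ j, δ ≤ |x + γs j|) :
    ContinuousOn (fun x => ∑' j, c j / (x + γs j)) s := by
  rw [continuousOn_iff_continuous_restrict]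
  have : s.restrict (fun x => ∑' j, c j / (x + γs j))
      = fun x : s => ∑' j, c j / (x.1 + γs j) := rfl
  show Continuous (fun x : s => ∑' j, c j / (x.1 + γs j))
  apply continuous_tsum (u := fun j => c j / δ)
  · intro j
    apply continuous_const.div (by fun_prop)
    intro y
    have := hb y.1 y.2 j
    intro h0
    rw [h0] at this
    simp at this
    linarith
  · exact hcsum.div_const δ
  · intro j y
    rw [Real.norm_eq_abs, abs_div, abs_of_pos (hc j)]
    exact div_le_div_of_nonneg_left (hc j).le hδ (hb y.1 y.2 j)

lemma aux_lower (c γs : ℕ → ℝ) (hc : ∀ j, 0 < c j) (hcsum : Summable c)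
    (k : ℕ) (x D : ℝ) (hD : 0 < D)
    (hneg : ∀ j, j < k → D ≤ -(x + γs j))
    (hpos : ∀ j, k ≤ j → 0 < x + γs j)
    (ht : Summable fun j => c j / (x + γs j)) :
    c k / (x + γs k) - (∑' j, c j) / D ≤ ∑' j, c j / (x + γs j) := by
  have h2 : ∑' j, c j / (x + γs j)
      = c k / (x + γs k) + ∑' j, if j = k then 0 else c j / (x + γs j) :=
    Summable.tsum_eq_add_tsum_ite ht k
  set l : ℕ → ℝ := fun j => if j < k then -(c j / D) else 0 with hldef
  have hlsum : Summable l := by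
    apply summable_of_ne_finset_zero (s := Finset.range k)
    intro b hb
    simp only [Finset.mem_range, not_lt] at hb
    simp [hldef, Nat.not_lt.mpr hb]
  have hitsum : Summable (fun j => if j = k then 0 else c j / (x + γs j)) := by
    refine (ht.sub (summable_of_ne_finset_zero (s := {k}) (f := fun j => if j = k then c j / (x + γs j) else 0) ?_)).congr ?_
    · intro b hb; simp at hb; simp [hb]
    · intro j; by_cases h : j = k <;> simp [h]
  have hlle : ∀ j, l j ≤ (if j = k then 0 else c j / (x + γs j)) := by
    intro j
    by_cases hj : j = k
    · subst hj; simp [hldef]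
    · rw [if_neg hj]
      by_cases hjk : j < k
      · have hD2 := hneg j hjk
        have h1 : c j / (x + γs j) = -(c j / (-(x + γs j))) := by
          rw [div_neg, neg_neg]
        rw [hldef]
        simp only [if_pos hjk]
        rw [h1]
        apply neg_le_neg
        exact div_le_div_of_nonneg_left (hc j).le hD hD2
      · have hk : k ≤ j := le_of_not_gt hjk
        have := hpos j hk
        have : 0 ≤ c j / (x + γs j) := le_of_lt (div_pos (hc j) this)
        simp [hldef, hjk]
        linarith
  have hlb : -((∑' j, c j) / D) ≤ ∑' j, l j := by
    have h3 : ∑' j, -(l j) ≤ ∑' j, c j / D := by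
      apply Summable.tsum_le_tsum _ hlsum.neg (hcsum.div_const D)
      intro j
      simp only [hldef]
      by_cases hjk : j < k
      · simp [hjk]
      · simp [hjk]
        exact div_nonneg (hc j).le hD.le
    rw [tsum_neg, tsum_div_const] at h3
    linarith [h3]
  have h4 : ∑' j, l j ≤ ∑' j, if j = k then 0 else c j / (x + γs j) :=
    Summable.tsum_le_tsum hlle hlsum hitsum
  rw [h2]
  rw [div_eq_mul_inv, sub_eq_add_neg, ← div_eq_mul_inv]
  gcongr
  linarith

lemma aux_upper (c γs : ℕ → ℝ) (hc : ∀ j, 0 < c j) (hcsum : Summable c)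
    (k : ℕ) (x D : ℝ) (hD : 0 < D)
    (hpos : ∀ j, k < j → D ≤ x + γs j)
    (hneg : ∀ j, j ≤ k → x + γs j < 0)
    (ht : Summable fun j => c j / (x + γs j)) :
    ∑' j, c j / (x + γs j) ≤ c k / (x + γs k) + (∑' j, c j) / D := by
  have h2 : ∑' j, c j / (x + γs j)
      = c k / (x + γs k) + ∑' j, if j = k then 0 else c j / (x + γs j) :=
    Summable.tsum_eq_add_tsum_ite ht k
  set w : ℕ → ℝ := fun j => if k < j then c j / D else 0 with hwdef
  have hwsum : Summable w := by
    apply Summable.of_nonneg_of_le _ _ (hcsum.div_const D)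
    · intro j; by_cases h : k < j <;> simp [hwdef, h]; exact div_nonneg (hc j).le hD.le
    · intro j; by_cases h : k < j <;> simp [hwdef, h]; exact div_nonneg (hc j).le hD.le
  have hitsum : Summable (fun j => if j = k then 0 else c j / (x + γs j)) := by
    refine (ht.sub (summable_of_ne_finset_zero (s := {k}) (f := fun j => if j = k then c j / (x + γs j) else 0) ?_)).congr ?_
    · intro b hb; simp at hb; simp [hb]
    · intro j; by_cases h : j = k <;> simp [h]
  have hle : ∀ j, (if j = k then 0 else c j / (x + γs j)) ≤ w j := by
    intro j
    by_cases hj : j = k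
    · subst hj; simp [hwdef]
    · rw [if_neg hj]
      by_cases hjk : k < j
      · have hD2 := hpos j hjk
        rw [hwdef]; simp only [if_pos hjk]
        exact div_le_div_of_nonneg_left (hc j).le hD hD2
      · have hk : j ≤ k := le_of_not_gt hjk
        have hxn := hneg j hk
        have : c j / (x + γs j) < 0 := div_neg_of_pos_of_neg (hc j) hxn
        simp [hwdef, hjk]
        linarith
  have h4 : ∑' j, (if j = k then 0 else c j / (x + γs j)) ≤ ∑' j, w j :=
    Summable.tsum_le_tsum hle hitsum hwsum
  have h5 : ∑' j, w j ≤ (∑' j, c j) / D := by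
    rw [show (∑' j, c j) / D = ∑' j, c j / D by rw [tsum_div_const]]
    apply Summable.tsum_le_tsum _ hwsum (hcsum.div_const D)
    intro j; by_cases h : k < j <;> simp [hwdef, h]; exact div_nonneg (hc j).le hD.le
  rw [h2]
  gcongr
  linarith

set_option maxHeartbeats 1000000 in
/-- Assume additionally `∑ₖ c k < ∞`. Then for every `a > 0`, `ξ ∈ [0,1]` and
every integer `k ≥ 2` (here `k ≥ 1` in `0`-based indexing), the series `∑ⱼ c j / (x + γ j)`
converges absolutely for every `x ∈ (-γ k, -γ (k-1))`, and `ℓ_a` has a real zero in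
`(-γ k, -γ (k-1))`; moreover, if `a^(2(1-ξ)) > S`, then `ℓ_a` also has a real zero in
`(-γ 0, 0)`. (Indexing is `0`-based: `c 0, γ 0` correspond to `c_1, γ_1`.) -/
theorem stmt_12
    (c γs : ℕ → ℝ)
    (hc : ∀ j, 0 < c j)
    (hγ0 : 0 < γs 0)
    (hγmono : StrictMono γs)
    (hγtop : Filter.Tendsto γs Filter.atTop Filter.atTop)
    (hSsum : Summable fun j => c j / γs j)
    (hS : (∑' j, c j / γs j) < 1)
    (hcsum : Summable c)
    (a ξ : ℝ) (ha : 0 < a) (hξ : ξ ∈ Set.Icc (0:ℝ) 1)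
    (ℓ : ℝ → ℝ)
    (hℓ : ∀ x, ℓ x = x ^ 2 + a ^ 2 - a ^ (2 * ξ) * ∑' j, c j / (x + γs j)) :
    (∀ k : ℕ, 1 ≤ k →
      (∀ x ∈ Set.Ioo (-γs k) (-γs (k - 1)), Summable fun j => |c j / (x + γs j)|) ∧
      ∃ μ ∈ Set.Ioo (-γs k) (-γs (k - 1)), ℓ μ = 0) ∧
    ((∑' j, c j / γs j) < a ^ (2 * (1 - ξ)) →
      ∃ μ ∈ Set.Ioo (-γs 0) 0, ℓ μ = 0) := by
  have haξ : 0 < a ^ (2 * ξ) := Real.rpow_pos_of_pos ha _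
  have ha2 : 0 < a ^ 2 := pow_pos ha 2
  have hT0 : 0 ≤ ∑' j, c j := tsum_nonneg fun j => (hc j).le
  set T := ∑' j, c j with hTdef
  constructor
  · intro k hk
    set kp := k - 1 with hkpdef
    have hkk : kp < k := Nat.sub_lt hk one_pos
    have hk1 : kp + 1 = k := Nat.succ_pred_eq_of_pos hk
    have hγlt : γs kp < γs k := hγmono hkk
    set d := γs k - γs kp with hddef
    have hd : 0 < d := by rw [hddef]; linarith
    have hγkp0 : 0 < γs kp := lt_of_lt_of_le hγ0 (hγmono.monotone (Nat.zero_le _))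
    have hsummability : ∀ x ∈ Set.Ioo (-γs k) (-γs kp),
        Summable fun j => |c j / (x + γs j)| := by
      intro x hx
      obtain ⟨hx1, hx2⟩ := hx
      have h1 : 0 < -(x + γs kp) := by linarith
      have h2 : 0 < x + γs k := by linarith
      refine aux_abs_sum c γs hc hcsum x (min (-(x + γs kp)) (x + γs k)) (lt_min h1 h2) ?_
      intro j
      by_cases hj : j < k
      · have hjle : γs j ≤ γs kp := hγmono.monotone (Nat.le_pred_of_lt hj)
        have hneg : x + γs j < 0 := by linarith
        rw [abs_of_neg hneg]
        have := min_le_left (-(x + γs kp)) (x + γs k)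
        linarith
      · have hjk : k ≤ j := le_of_not_gt hj
        have hjle : γs k ≤ γs j := hγmono.monotone hjk
        have h3 : 0 < x + γs j := by linarith
        rw [abs_of_pos h3]
        have := min_le_right (-(x + γs kp)) (x + γs k)
        linarith
    refine ⟨hsummability, ?_⟩
    -- left point p
    set M := (γs k ^ 2 + a ^ 2) / a ^ (2 * ξ) + T / (d / 2) with hMdef
    have hM : 0 < M := add_pos_of_pos_of_nonneg
      (div_pos (by nlinarith [sq_nonneg (γs k)]) haξ) (div_nonneg hT0 (by linarith))
    set ε := min (d / 2) (c k / M) with hεdef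
    have hε : 0 < ε := lt_min (by linarith) (div_pos (hc k) hM)
    have hεd : ε ≤ d / 2 := min_le_left _ _
    set p := -γs k + ε with hpdef
    have hMε : M ≤ c k / ε := by
      rw [le_div_iff₀ hε]
      calc M * ε ≤ M * (c k / M) := mul_le_mul_of_nonneg_left (min_le_right _ _) hM.le
        _ = c k := by field_simp
    have hppos : p ∈ Set.Ioo (-γs k) (-γs kp) := by
      constructor
      · rw [hpdef]; linarith
      · rw [hpdef]; linarith
    have htp : Summable fun j => c j / (p + γs j) := (hsummability p hppos).of_abs
    have hpk : p + γs k = ε := by rw [hpdef]; ring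
    have hglow : c k / (p + γs k) - T / (d / 2) ≤ ∑' j, c j / (p + γs j) := by
      apply aux_lower c γs hc hcsum k p (d / 2) (by linarith)
      · intro j hj
        have hjle : γs j ≤ γs kp := hγmono.monotone (Nat.le_pred_of_lt hj)
        rw [hpdef]; linarith
      · intro j hjk
        have : γs k ≤ γs j := hγmono.monotone hjk
        rw [hpdef]; linarith
      · exact htp
    rw [hpk] at hglow
    have hℓp : ℓ p < 0 := by
      have key : γs k ^ 2 + a ^ 2 + a ^ (2 * ξ) * (T / (d / 2)) ≤ a ^ (2 * ξ) * (c k / ε) := by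
        have h5 := mul_le_mul_of_nonneg_left hMε haξ.le
        rw [hMdef, mul_add] at h5
        have hcancel : a ^ (2 * ξ) * ((γs k ^ 2 + a ^ 2) / a ^ (2 * ξ)) = γs k ^ 2 + a ^ 2 := by
          field_simp
        rw [hcancel] at h5
        exact h5
      have hpsq : p ^ 2 < γs k ^ 2 := by
        apply sq_lt_sq' hppos.1
        rw [hpdef]; linarith
      rw [hℓ p]
      have h1 : a ^ (2 * ξ) * (c k / ε) - a ^ (2 * ξ) * (T / (d / 2))
          ≤ a ^ (2 * ξ) * ∑' j, c j / (p + γs j) := by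
        rw [← mul_sub]
        exact mul_le_mul_of_nonneg_left hglow haξ.le
      clear_value T d M ε p
      linarith
    -- right point q
    set ε' := min (d / 2) (c kp / (T / (d / 2) + 1)) with hε'def
    have hT1 : 0 < T / (d / 2) + 1 := by
      have := div_nonneg hT0 (by linarith : (0:ℝ) ≤ d / 2); linarith
    have hε' : 0 < ε' := lt_min (by linarith) (div_pos (hc kp) hT1)
    have hε'd : ε' ≤ d / 2 := min_le_left _ _
    set q := -γs kp - ε' with hqdef
    have hqmem : q ∈ Set.Ioo (-γs k) (-γs kp) := by
      constructor
      · rw [hqdef]; linarith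
      · rw [hqdef]; linarith
    have htq : Summable fun j => c j / (q + γs j) := (hsummability q hqmem).of_abs
    have hqk : q + γs kp = -ε' := by rw [hqdef]; ring
    have hub : ∑' j, c j / (q + γs j) ≤ c kp / (q + γs kp) + T / (d / 2) := by
      apply aux_upper c γs hc hcsum kp q (d / 2) (by linarith)
      · intro j hj
        have hjk : k ≤ j := by omega
        have : γs k ≤ γs j := hγmono.monotone hjk
        rw [hqdef]; linarith
      · intro j hj
        have : γs j ≤ γs kp := hγmono.monotone hj
        rw [hqdef]; linarith
      · exact htq
    rw [hqk] at hub
    have hMε' : T / (d / 2) + 1 ≤ c kp / ε' := by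
      rw [le_div_iff₀ hε']
      calc (T / (d / 2) + 1) * ε' ≤ (T / (d / 2) + 1) * (c kp / (T / (d / 2) + 1)) :=
            mul_le_mul_of_nonneg_left (min_le_right _ _) hT1.le
        _ = c kp := by field_simp
    have hℓq : 0 < ℓ q := by
      have h6 : c kp / (-ε') = -(c kp / ε') := by rw [div_neg]
      rw [h6] at hub
      rw [hℓ q]
      have h1 : a ^ (2 * ξ) * ∑' j, c j / (q + γs j)
          ≤ a ^ (2 * ξ) * (-(c kp / ε')) + a ^ (2 * ξ) * (T / (d / 2)) := by
        rw [← mul_add]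
        exact mul_le_mul_of_nonneg_left hub haξ.le
      have h2 : a ^ (2 * ξ) * (T / (d / 2)) + a ^ (2 * ξ) * 1
          ≤ a ^ (2 * ξ) * (c kp / ε') := by
        rw [← mul_add]
        exact mul_le_mul_of_nonneg_left hMε' haξ.le
      have h3 : a ^ (2 * ξ) * (-(c kp / ε')) = -(a ^ (2 * ξ) * (c kp / ε')) := by ring
      rw [h3] at h1
      rw [mul_one] at h2
      nlinarith [sq_nonneg q]
    have hpq : p ≤ q := by rw [hpdef, hqdef]; linarith
    have hδ : (0:ℝ) < min ε ε' := lt_min hε hε'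
    have hcont : ContinuousOn (fun x => ∑' j, c j / (x + γs j)) (Set.Icc p q) := by
      apply aux_cont c γs hc hcsum _ _ hδ
      intro x hx j
      obtain ⟨hxp, hxq⟩ := hx
      rw [hpdef] at hxp
      rw [hqdef] at hxq
      by_cases hj : j < k
      · have hjle : γs j ≤ γs kp := hγmono.monotone (Nat.le_pred_of_lt hj)
        have hneg : x + γs j < 0 := by linarith
        rw [abs_of_neg hneg]
        have := min_le_right ε ε'
        linarith
      · have hjk : k ≤ j := le_of_not_gt hj
        have : γs k ≤ γs j := hγmono.monotone hjk
        have := min_le_left ε ε'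
        have hpos : 0 < x + γs j := by linarith
        rw [abs_of_pos hpos]
        linarith
    have hℓcont : ContinuousOn ℓ (Set.Icc p q) := by
      have hc2 : ContinuousOn (fun x => x ^ 2 + a ^ 2 - a ^ (2 * ξ) * ∑' j, c j / (x + γs j))
          (Set.Icc p q) :=
        (((continuous_pow 2).continuousOn.add continuousOn_const).sub
          (continuousOn_const.mul hcont))
      exact hc2.congr fun x _ => hℓ x
    have h0 : (0:ℝ) ∈ Set.Ioo (ℓ p) (ℓ q) := ⟨hℓp, hℓq⟩
    obtain ⟨μ, hμmem, hμ⟩ := intermediate_value_Ioo hpq hℓcont h0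
    exact ⟨μ, ⟨lt_trans hppos.1 hμmem.1, lt_trans hμmem.2 hqmem.2⟩, hμ⟩
  · intro hS'
    set M0 := (γs 0 ^ 2 + a ^ 2) / a ^ (2 * ξ) + T with hM0def
    have hM0 : 0 < M0 := add_pos_of_pos_of_nonneg
      (div_pos (by nlinarith [sq_nonneg (γs 0)]) haξ) hT0
    set ε := min (γs 0 / 2) (c 0 / M0) with hεdef
    have hε : 0 < ε := lt_min (by linarith) (div_pos (hc 0) hM0)
    have hεd : ε ≤ γs 0 / 2 := min_le_left _ _
    set p := -γs 0 + ε with hpdef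
    have hMε : M0 ≤ c 0 / ε := by
      rw [le_div_iff₀ hε]
      calc M0 * ε ≤ M0 * (c 0 / M0) := mul_le_mul_of_nonneg_left (min_le_right _ _) hM0.le
        _ = c 0 := by field_simp
    have hppos : p ∈ Set.Ioo (-γs 0) (0:ℝ) := by
      constructor
      · rw [hpdef]; linarith
      · rw [hpdef]; linarith
    have hbound : ∀ x ∈ Set.Icc p (0:ℝ), ∀ j, ε ≤ |x + γs j| := by
      intro x hx j
      have hγj : γs 0 ≤ γs j := hγmono.monotone (Nat.zero_le _)
      have hxp : p ≤ x := hx.1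
      have hpos : 0 < x + γs j := by rw [hpdef] at hxp; linarith
      rw [abs_of_pos hpos]
      rw [hpdef] at hxp; linarith
    have htp : Summable fun j => c j / (p + γs j) :=
      (aux_abs_sum c γs hc hcsum p ε hε (hbound p ⟨le_refl p, hppos.2.le⟩)).of_abs
    have hpk : p + γs 0 = ε := by rw [hpdef]; ring
    have hglow : c 0 / (p + γs 0) - T / 1 ≤ ∑' j, c j / (p + γs j) := by
      apply aux_lower c γs hc hcsum 0 p 1 one_pos
      · intro j hj; exact absurd hj (Nat.not_lt_zero j)
      · intro j _
        have hγj : γs 0 ≤ γs j := hγmono.monotone (Nat.zero_le _)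
        rw [hpdef]; linarith
      · exact htp
    rw [hpk, div_one] at hglow
    have hℓp : ℓ p < 0 := by
      have key : γs 0 ^ 2 + a ^ 2 + a ^ (2 * ξ) * T ≤ a ^ (2 * ξ) * (c 0 / ε) := by
        have h5 := mul_le_mul_of_nonneg_left hMε haξ.le
        rw [hM0def, mul_add] at h5
        have hcancel : a ^ (2 * ξ) * ((γs 0 ^ 2 + a ^ 2) / a ^ (2 * ξ)) = γs 0 ^ 2 + a ^ 2 := by
          field_simp
        rw [hcancel] at h5
        exact h5
      have hpsq : p ^ 2 < γs 0 ^ 2 := by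
        apply sq_lt_sq' hppos.1
        rw [hpdef]; linarith
      rw [hℓ p]
      have h1 : a ^ (2 * ξ) * (c 0 / ε) - a ^ (2 * ξ) * T
          ≤ a ^ (2 * ξ) * ∑' j, c j / (p + γs j) := by
        rw [← mul_sub]
        exact mul_le_mul_of_nonneg_left hglow haξ.le
      clear_value T M0 ε p
      linarith
    have hℓ0 : 0 < ℓ 0 := by
      rw [hℓ 0]
      have h00 : ∑' j, c j / ((0:ℝ) + γs j) = ∑' j, c j / γs j := by
        simp [zero_add]
      rw [h00]
      have hpow : a ^ (2 * ξ) * a ^ (2 * (1 - ξ)) = a ^ 2 := by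
        rw [← Real.rpow_add ha]
        have he : 2 * ξ + 2 * (1 - ξ) = (2:ℝ) := by ring
        rw [he, ← Real.rpow_natCast a 2]
        norm_num
      have hmul : a ^ (2 * ξ) * (∑' j, c j / γs j) < a ^ (2 * ξ) * a ^ (2 * (1 - ξ)) :=
        mul_lt_mul_of_pos_left hS' haξ
      rw [hpow] at hmul
      have h02 : (0:ℝ) ^ 2 = 0 := by norm_num
      linarith
    have hcont : ContinuousOn (fun x => ∑' j, c j / (x + γs j)) (Set.Icc p 0) :=
      aux_cont c γs hc hcsum _ ε hε hbound
    have hℓcont : ContinuousOn ℓ (Set.Icc p 0) := by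
      have hc2 : ContinuousOn (fun x => x ^ 2 + a ^ 2 - a ^ (2 * ξ) * ∑' j, c j / (x + γs j))
          (Set.Icc p 0) :=
        (((continuous_pow 2).continuousOn.add continuousOn_const).sub
          (continuousOn_const.mul hcont))
      exact hc2.congr fun x _ => hℓ x
    obtain ⟨μ, hμmem, hμ⟩ := intermediate_value_Ioo hppos.2.le hℓcont ⟨hℓp, hℓ0⟩
    exact ⟨μ, ⟨lt_trans hppos.1 hμmem.1, hμmem.2⟩, hμ⟩
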